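/- Mistake lower bound for τ·ℓ: let λ ∈ (0,1], Δφ ∈ ℝ^d with 0 < ‖Δφ‖² ≤ 1, θ ∈ ℝ^d with θ·Δφ ≤ 0, ℓ = max(0, 1 - θ·Δφ), and τ = min(1/λ, ℓ/‖Δφ‖²). Then τ·ℓ ≥ 1. -/

import Mathlib

theorem tau_mul_loss_ge_one_of_mistake {d : ℕ}
    (lam : ℝ) (hlam0 : 0 < lam) (hlam1 : lam ≤ 1)
    (Δφ θ : EuclideanSpace ℝ (Fin d))
    (hΔ0 : 0 < ‖Δφ‖ ^ 2) (hΔ1 : ‖Δφ‖ ^ 2 ≤ 1)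
    (hmistake : (inner ℝ θ Δφ : ℝ) ≤ 0)
    (ℓ τ : ℝ)
    (hℓ : ℓ = max 0 (1 - (inner ℝ θ Δφ : ℝ)))
    (hτ : τ = min (1 / lam) (ℓ / ‖Δφ‖ ^ 2)) :
    1 ≤ τ * ℓ := by
  have hℓ1 : 1 ≤ ℓ := by
    rw [hℓ]; exact le_max_of_le_right (by linarith)
  have hτ1 : 1 ≤ τ := by
    rw [hτ]
    refine le_min ?_ ?_
    · rw [le_div_iff₀ hlam0]; linarith
    · rw [le_div_iff₀ hΔ0]; nlinarith
  nlinarith
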